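/- Let a₁₂, b₁, b₂ : I → ℝ on an interval I and suppose (x₀, y₀) and (x₁, y₁) are two differentiable solutions on I of the planar system dx/dt = a₁₂(t) y + b₁(t), dy/dt = −a₁₂(t) x + b₂(t). Then the squared Euclidean distance t ↦ (x₀(t) − x₁(t))² + (y₀(t) − y₁(t))² is constant on I. (Together with a second solution this yields a superposition rule for this system involving only m = 2 particular solutions, reflecting that the relevant group is the Euclidean group rather than the affine group.) -/

import Mathlib

/-- For the planar system `dx/dt = a₁₂(t)y + b₁(t)`, `dy/dt = −a₁₂(t)x + b₂(t)`
(a Lie system of the Euclidean group), the squared Euclidean distance between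
any two solutions `(x₀,y₀)` and `(x₁,y₁)` is constant on the interval `I`. -/
theorem stmt_12 (I : Set ℝ) (hI : I.OrdConnected)
    (a₁₂ b₁ b₂ : ℝ → ℝ)
    (x₀ y₀ x₁ y₁ : ℝ → ℝ)
    (h₀x : ∀ t ∈ I, HasDerivAt x₀ (a₁₂ t * y₀ t + b₁ t) t)
    (h₀y : ∀ t ∈ I, HasDerivAt y₀ (-(a₁₂ t) * x₀ t + b₂ t) t)
    (h₁x : ∀ t ∈ I, HasDerivAt x₁ (a₁₂ t * y₁ t + b₁ t) t)
    (h₁y : ∀ t ∈ I, HasDerivAt y₁ (-(a₁₂ t) * x₁ t + b₂ t) t) :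
    ∀ s ∈ I, ∀ t ∈ I,
      (x₀ s - x₁ s) ^ 2 + (y₀ s - y₁ s) ^ 2
        = (x₀ t - x₁ t) ^ 2 + (y₀ t - y₁ t) ^ 2 := by
  -- derivative of f = (x₀-x₁)² + (y₀-y₁)² is zero on I
  set f : ℝ → ℝ := fun t => (x₀ t - x₁ t) ^ 2 + (y₀ t - y₁ t) ^ 2 with hf
  have hderiv : ∀ t ∈ I, HasDerivAt f 0 t := by
    intro t ht
    have h1 := ((h₀x t ht).sub (h₁x t ht)).pow 2
    have h2 := ((h₀y t ht).sub (h₁y t ht)).pow 2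
    have h := h1.add h2
    exact h.congr_deriv (by simp only [Pi.sub_apply, Nat.cast_ofNat, Nat.reduceSub, pow_one]; ring)
  -- constant on any closed subinterval
  have key : ∀ u ∈ I, ∀ v ∈ I, u ≤ v → f u = f v := by
    intro u hu v hv huv
    have hsub : Set.Icc u v ⊆ I := hI.out hu hv
    have := constant_of_has_deriv_right_zero (f := f) (a := u) (b := v)
      (fun x hx => ((hderiv x (hsub hx)).continuousAt).continuousWithinAt)
      (fun x hx => (hderiv x (hsub (Set.mem_Icc_of_Ico hx))).hasDerivWithinAt)
    exact (this v (Set.right_mem_Icc.2 huv)).symm ▸ rfl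
  intro s hs t ht
  rcases le_total s t with h | h
  · exact key s hs t ht h
  · exact (key t ht s hs h).symm
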